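/- RLCT additivity for sums in separate variables: if K(w_1, w_2) = K_1(w_1) + K_2(w_2) with K_1, K_2 ≥ 0, and zeta functions ζ_i(z) = ∫ K_i(w_i)^z φ_i(w_i) dw_i have largest poles at −λ_i of order m_i, then ζ(z) = ∫∫ (K_1(w_1)+K_2(w_2))^z φ_1(w_1)φ_2(w_2) dw_1 dw_2 has largest pole at −(λ_1 + λ_2) of order m_1 + m_2 − 1, in the special case where K_1(w_1) = w_1^{2} on [0,1] with φ_1 = 1 and K_2(w_2) = w_2^{2} on [0,1] with φ_2 = 1. -/

import Mathlib

open MeasureTheory Filter Set Pointwise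

namespace RLCT19

noncomputable def f (z : ℝ) (p : ℝ × ℝ) : ℝ := (p.1 ^ 2 + p.2 ^ 2) ^ z

def T (m : ℝ) : Set (ℝ × ℝ) := Icc 0 m ×ˢ Icc 0 m

def A : Set (ℝ × ℝ) := T 1 \ T 2⁻¹

noncomputable def q (z : ℝ) : ℝ := Real.exp (-(Real.log 4 * (z + 1)))

lemma measurable_f (z : ℝ) : Measurable (f z) := by unfold f; fun_prop

lemma measurableSet_T (m : ℝ) : MeasurableSet (T m) :=
  measurableSet_Icc.prod measurableSet_Icc

lemma measurableSet_A : MeasurableSet A :=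
  (measurableSet_T 1).diff (measurableSet_T 2⁻¹)

lemma mem_T {m : ℝ} {p : ℝ × ℝ} : p ∈ T m ↔ (0 ≤ p.1 ∧ p.1 ≤ m) ∧ 0 ≤ p.2 ∧ p.2 ≤ m := by
  simp [T, Set.mem_prod, Prod.le_def]; tauto

lemma T_mono {m m' : ℝ} (h : m ≤ m') : T m ⊆ T m' := fun p hp => by
  rw [mem_T] at *; exact ⟨⟨hp.1.1, hp.1.2.trans h⟩, hp.2.1, hp.2.2.trans h⟩

lemma base_lt_of_mem_A' {p : ℝ × ℝ} (hp : p ∈ A) : 4⁻¹ < p.1 ^ 2 + p.2 ^ 2 := by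
  obtain ⟨h1, h2⟩ := hp
  rw [mem_T] at h1 h2
  obtain ⟨⟨hx0, hx1⟩, hy0, hy1⟩ := h1
  have : ¬ (p.1 ≤ 2⁻¹ ∧ p.2 ≤ 2⁻¹) := fun h => h2 ⟨⟨hx0, h.1⟩, hy0, h.2⟩
  rcases not_and_or.1 this with h | h
  · push_neg at h; nlinarith
  · push_neg at h; nlinarith

lemma base_le_of_mem_T1 {p : ℝ × ℝ} (hp : p ∈ T 1) : p.1 ^ 2 + p.2 ^ 2 ≤ 2 := by
  rw [mem_T] at hp; nlinarith [hp.1.1, hp.1.2, hp.2.1, hp.2.2]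

lemma base_nonneg {p : ℝ × ℝ} : (0:ℝ) ≤ p.1 ^ 2 + p.2 ^ 2 := by positivity

lemma f_le_four {z : ℝ} (hz : z ∈ Icc (-1 : ℝ) 0) {p : ℝ × ℝ} (hp : p ∈ A) :
    f z p ≤ 4 := by
  have hb : (4:ℝ)⁻¹ < p.1 ^ 2 + p.2 ^ 2 := base_lt_of_mem_A' hp
  rcases le_or_gt 1 (p.1 ^ 2 + p.2 ^ 2) with h | h
  · exact (Real.rpow_le_one_of_one_le_of_nonpos h hz.2).trans (by norm_num)
  · calc f z p ≤ (p.1 ^ 2 + p.2 ^ 2) ^ (-1 : ℝ) :=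
        Real.rpow_le_rpow_of_exponent_ge (lt_trans (by norm_num) hb) h.le hz.1
    _ = (p.1 ^ 2 + p.2 ^ 2)⁻¹ := Real.rpow_neg_one _
    _ ≤ 4 := by { rw [inv_le_comm₀ (by linarith) (by norm_num)]; linarith }

lemma volume_T_le : volume (T 1) ≤ 1 := by
  have : volume (T 1) = 1 := by
    rw [T, Measure.volume_eq_prod, Measure.prod_prod, Real.volume_Icc]
    norm_num
  exact this.le

lemma integrableOn_A {z : ℝ} (hz : z ∈ Icc (-1 : ℝ) 0) : IntegrableOn (f z) A := by
  refine Measure.integrableOn_of_bounded (M := 4) ?_ (measurable_f z).aestronglyMeasurable ?_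
  · exact ne_top_of_le_ne_top (by simp) (le_trans (measure_mono diff_subset) volume_T_le)
  · filter_upwards [ae_restrict_mem measurableSet_A] with p hp
    rw [show f z p = (p.1 ^ 2 + p.2 ^ 2) ^ z from rfl] at *
    rw [Real.norm_of_nonneg (Real.rpow_nonneg base_nonneg z)]
    exact f_le_four hz hp


lemma null_axes : volume {p : ℝ × ℝ | p.1 = 0 ∨ p.2 = 0} = 0 := by
  have h1 : {p : ℝ × ℝ | p.1 = 0 ∨ p.2 = 0} ⊆
      (({0} : Set ℝ) ×ˢ (univ : Set ℝ)) ∪ ((univ : Set ℝ) ×ˢ ({0} : Set ℝ)) := by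
    rintro p (h | h)
    · exact Or.inl ⟨h, trivial⟩
    · exact Or.inr ⟨trivial, h⟩
  refine measure_mono_null h1 (measure_union_null ?_ ?_) <;>
    rw [Measure.volume_eq_prod, Measure.prod_prod] <;> simp

lemma integrableOn_rpow_Icc {z : ℝ} (hz : -1 < z) :
    IntegrableOn (fun x : ℝ => x ^ z) (Icc 0 1) := by
  have h := (intervalIntegral.intervalIntegrable_rpow' hz (a := 0) (b := 1)).1
  exact h.congr_set_ae Ioc_ae_eq_Icc.symm

lemma integrableOn_T1 {z : ℝ} (hz : -1 < z) : IntegrableOn (f z) (T 1) := by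
  rcases le_or_gt 0 z with h | h
  · refine Measure.integrableOn_of_bounded (M := 2 ^ z)
      (ne_top_of_le_ne_top (by simp) volume_T_le) (measurable_f z).aestronglyMeasurable ?_
    filter_upwards [ae_restrict_mem (measurableSet_T 1)] with p hp
    rw [show f z p = (p.1 ^ 2 + p.2 ^ 2) ^ z from rfl,
      Real.norm_of_nonneg (Real.rpow_nonneg base_nonneg z)]
    exact Real.rpow_le_rpow base_nonneg (base_le_of_mem_T1 hp) h
  · have h1 : Integrable (fun p : ℝ × ℝ => (p.1 ^ z) * (p.2 ^ z))
        ((volume.restrict (Icc (0:ℝ) 1)).prod (volume.restrict (Icc (0:ℝ) 1))) :=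
      Integrable.mul_prod (integrableOn_rpow_Icc hz) (integrableOn_rpow_Icc hz)
    rw [Measure.prod_restrict, ← Measure.volume_eq_prod] at h1
    have h2 : IntegrableOn (fun p : ℝ × ℝ => 2 ^ z * ((p.1 ^ z) * (p.2 ^ z))) (T 1) :=
      h1.const_mul _
    refine h2.mono' (measurable_f z).aestronglyMeasurable ?_
    have hax : ∀ᵐ p : ℝ × ℝ ∂(volume.restrict (T 1)), ¬(p.1 = 0 ∨ p.2 = 0) :=
      ae_restrict_of_ae (measure_eq_zero_iff_ae_notMem.1 null_axes)
    filter_upwards [ae_restrict_mem (measurableSet_T 1), hax] with p hp hp0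
    push_neg at hp0
    rw [mem_T] at hp
    have hx : 0 < p.1 := lt_of_le_of_ne hp.1.1 (Ne.symm hp0.1)
    have hy : 0 < p.2 := lt_of_le_of_ne hp.2.1 (Ne.symm hp0.2)
    rw [show f z p = (p.1 ^ 2 + p.2 ^ 2) ^ z from rfl,
      Real.norm_of_nonneg (Real.rpow_nonneg base_nonneg z)]
    calc (p.1 ^ 2 + p.2 ^ 2) ^ z ≤ (2 * (p.1 * p.2)) ^ z := by
          refine Real.rpow_le_rpow_of_nonpos (by positivity) (by nlinarith [sq_nonneg (p.1 - p.2)]) h.le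
    _ = 2 ^ z * ((p.1 ^ z) * (p.2 ^ z)) := by
          rw [Real.mul_rpow (by norm_num) (by positivity),
            Real.mul_rpow hx.le hy.le]

lemma finrank_plane : Module.finrank ℝ (ℝ × ℝ) = 2 := by simp

lemma smul_T {c m : ℝ} (hc : 0 < c) : c • T m = T (c * m) := by
  ext p
  rw [Set.mem_smul_set_iff_inv_smul_mem₀ hc.ne', mem_T, mem_T]
  simp only [Prod.smul_fst, Prod.smul_snd, smul_eq_mul]
  rw [inv_mul_le_iff₀ hc, inv_mul_le_iff₀ hc,
    mul_nonneg_iff_of_pos_left (inv_pos.2 hc), mul_nonneg_iff_of_pos_left (inv_pos.2 hc)]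

lemma smul_A {c : ℝ} (hc : 0 < c) : c • A = T c \ T (c * 2⁻¹) := by
  have hinj : Function.Injective (fun x : ℝ × ℝ => c • x) :=
    smul_right_injective (ℝ × ℝ) hc.ne'
  have : c • A = c • T 1 \ c • T 2⁻¹ := by
    simp only [A, ← Set.image_smul]
    exact Set.image_diff hinj _ _
  rw [this, smul_T hc, smul_T hc, mul_one]

lemma integral_smul_A (z : ℝ) {c : ℝ} (hc : 0 < c) :
    ∫ p in c • A, f z p = (c ^ 2 * ((c ^ 2 : ℝ) ^ z)) * ∫ p in A, f z p := by
  have h := Measure.setIntegral_comp_smul_of_pos volume (f z) A hc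
  rw [finrank_plane] at h
  have h2 : ∀ x : ℝ × ℝ, f z (c • x) = (c ^ 2 : ℝ) ^ z * f z x := by
    intro x
    show ((c • x).1 ^ 2 + (c • x).2 ^ 2) ^ z = _
    simp only [Prod.smul_fst, Prod.smul_snd, smul_eq_mul]
    rw [show (c * x.1) ^ 2 + (c * x.2) ^ 2 = c ^ 2 * (x.1 ^ 2 + x.2 ^ 2) by ring,
      Real.mul_rpow (sq_nonneg c) base_nonneg]
    rfl
  simp only [h2, integral_const_mul] at h
  rw [smul_eq_mul] at h
  have hc2 : (c ^ 2 : ℝ) ≠ 0 := by positivity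
  field_simp at h ⊢
  linarith [h]

lemma q_eq (z : ℝ) : q z = 4⁻¹ * (4⁻¹ : ℝ) ^ z := by
  have h4 : (0:ℝ) < 4⁻¹ := by norm_num
  rw [q, show (4⁻¹:ℝ) * (4⁻¹:ℝ) ^ z = (4⁻¹:ℝ) ^ (1 + z) by
      rw [Real.rpow_add h4, Real.rpow_one],
    Real.rpow_def_of_pos h4, Real.log_inv]
  ring_nf

lemma q_pos (z : ℝ) : 0 < q z := Real.exp_pos _

lemma q_lt_one {z : ℝ} (hz : -1 < z) : q z < 1 := by
  rw [q, Real.exp_lt_one_iff]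
  have h4 : (0:ℝ) < Real.log 4 := Real.log_pos (by norm_num)
  nlinarith

lemma smul_A_eq (k : ℕ) : ((2:ℝ)⁻¹ ^ k) • A = T ((2:ℝ)⁻¹ ^ k) \ T ((2:ℝ)⁻¹ ^ (k + 1)) := by
  rw [smul_A (by positivity), pow_succ]

lemma mem_T_max {x : ℝ} {p : ℝ × ℝ} (h1 : 0 ≤ p.1) (h2 : 0 ≤ p.2) :
    p ∈ T x ↔ max p.1 p.2 ≤ x := by
  rw [mem_T, max_le_iff]; tauto

lemma union_eq : (⋃ k : ℕ, ((2:ℝ)⁻¹ ^ k) • A) = T 1 \ {0} := by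
  ext p
  simp only [mem_iUnion, smul_A_eq, mem_diff, mem_singleton_iff]
  constructor
  · rintro ⟨k, hk1, hk2⟩
    refine ⟨T_mono (pow_le_one₀ (by norm_num) (by norm_num)) hk1, ?_⟩
    rintro rfl
    exact hk2 (mem_T.2 ⟨⟨le_refl 0, by simp⟩, le_refl 0, by simp⟩)
  · rintro ⟨hp, hne⟩
    have h1 : 0 ≤ p.1 := (mem_T.1 hp).1.1
    have h2 : 0 ≤ p.2 := (mem_T.1 hp).2.1
    have hm0 : 0 < max p.1 p.2 := by
      by_contra hcon
      push_neg at hcon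
      rw [max_le_iff] at hcon
      exact hne (Prod.ext (le_antisymm hcon.1 h1) (le_antisymm hcon.2 h2))
    obtain ⟨n, hn⟩ := exists_pow_lt_of_lt_one hm0 (show (2:ℝ)⁻¹ < 1 by norm_num)
    have hP : ∃ k : ℕ, (2:ℝ)⁻¹ ^ (k + 1) < max p.1 p.2 :=
      ⟨n, lt_of_le_of_lt (pow_le_pow_of_le_one (by norm_num) (by norm_num) (Nat.le_succ n)) hn⟩
    classical
    refine ⟨Nat.find hP, ?_, ?_⟩
    · rw [mem_T_max h1 h2]
      rcases Nat.eq_zero_or_pos (Nat.find hP) with h0 | hpos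
      · rw [h0, pow_zero]
        exact max_le (mem_T.1 hp).1.2 (mem_T.1 hp).2.2
      · have hmin := Nat.find_min hP (show Nat.find hP - 1 < Nat.find hP by omega)
        push_neg at hmin
        have heq : Nat.find hP - 1 + 1 = Nat.find hP := by omega
        rw [← heq]
        exact hmin
    · intro hmem
      exact absurd ((mem_T_max h1 h2).1 hmem) (not_le.2 (Nat.find_spec hP))

lemma pairwise_disj : Pairwise (Function.onFun Disjoint (fun k : ℕ => ((2:ℝ)⁻¹ ^ k) • A)) := by
  have key : ∀ k l : ℕ, k < l →
      Disjoint (((2:ℝ)⁻¹ ^ k) • A) (((2:ℝ)⁻¹ ^ l) • A) := by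
    intro k l hkl
    rw [smul_A_eq, smul_A_eq, Set.disjoint_left]
    rintro p ⟨_, hk2⟩ ⟨hl1, _⟩
    exact hk2 (T_mono (pow_le_pow_of_le_one (by norm_num) (by norm_num) hkl) hl1)
  intro k l hne
  rcases hne.lt_or_gt with h | h
  · exact key k l h
  · exact (key l k h).symm

lemma zero_null : volume ({0} : Set (ℝ × ℝ)) = 0 := by
  have : ({0} : Set (ℝ × ℝ)) = ({0} : Set ℝ) ×ˢ ({0} : Set ℝ) := by
    ext p; simp [Prod.ext_iff]
  rw [this, Measure.volume_eq_prod, Measure.prod_prod]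
  simp

lemma factor_eq (z : ℝ) (k : ℕ) :
    ((2:ℝ)⁻¹ ^ k) ^ 2 * ((((2:ℝ)⁻¹ ^ k) ^ 2 : ℝ) ^ z) = (q z) ^ k := by
  have h1 : ((2:ℝ)⁻¹ ^ k) ^ 2 = (4⁻¹ : ℝ) ^ k := by
    rw [← pow_mul, mul_comm, pow_mul]; norm_num
  rw [h1, q_eq, mul_pow]
  congr 1
  rw [← Real.rpow_natCast (4⁻¹:ℝ) k, ← Real.rpow_mul (by norm_num), mul_comm,
    Real.rpow_mul (by norm_num), Real.rpow_natCast]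

lemma zeta_eq {z : ℝ} (hz : -1 < z) :
    ∫ p in T 1, f z p = (1 - q z)⁻¹ * ∫ p in A, f z p := by
  have hmeas : ∀ k : ℕ, MeasurableSet (((2:ℝ)⁻¹ ^ k) • A) := fun k => by
    rw [smul_A_eq]; exact (measurableSet_T _).diff (measurableSet_T _)
  have hsub : (⋃ k : ℕ, ((2:ℝ)⁻¹ ^ k) • A) ⊆ T 1 := by rw [union_eq]; exact diff_subset
  have hint : IntegrableOn (f z) (⋃ k : ℕ, ((2:ℝ)⁻¹ ^ k) • A) :=
    (integrableOn_T1 hz).mono_set hsub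
  have h1 : ∫ p in T 1, f z p = ∫ p in ⋃ k : ℕ, ((2:ℝ)⁻¹ ^ k) • A, f z p := by
    rw [union_eq]
    exact (setIntegral_congr_set ((diff_ae_eq_self).2 (measure_mono_null
      (inter_subset_right) zero_null))).symm
  rw [h1, integral_iUnion hmeas pairwise_disj hint]
  have h2 : ∀ k : ℕ, (∫ p in ((2:ℝ)⁻¹ ^ k) • A, f z p) = (q z) ^ k * ∫ p in A, f z p := by
    intro k
    rw [integral_smul_A z (by positivity), factor_eq]
  simp only [h2]
  rw [tsum_mul_right, tsum_geometric_of_lt_one (q_pos z).le (q_lt_one hz)]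

-- L1 : factor limit
lemma tendsto_factor :
    Tendsto (fun z : ℝ => (z + 1) * (1 - q z)⁻¹) (nhdsWithin (-1) (Set.Ioi (-1)))
      (nhds (Real.log 4)⁻¹) := by
  have hlog : (0:ℝ) < Real.log 4 := Real.log_pos (by norm_num)
  set φ : ℝ → ℝ := fun s => 1 - Real.exp (-(Real.log 4 * s)) with hφ
  have hd : HasDerivAt φ (Real.log 4) 0 := by
    have h1 : HasDerivAt (fun s : ℝ => -(Real.log 4 * s)) (-(Real.log 4)) 0 := by
      exact ((hasDerivAt_id (0:ℝ)).const_mul (Real.log 4)).neg.congr_deriv (by simp)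
    have h2 := h1.exp
    have h3 := (hasDerivAt_const (0:ℝ) (1:ℝ)).sub h2
    exact h3.congr_deriv (by simp)
  have hslope : Tendsto (fun s : ℝ => φ s / s) (nhdsWithin 0 {(0:ℝ)}ᶜ) (nhds (Real.log 4)) := by
    have := hasDerivAt_iff_tendsto_slope.1 hd
    refine this.congr' ?_
    filter_upwards [self_mem_nhdsWithin] with s hs
    rw [slope_def_field]
    have : φ 0 = 0 := by simp [hφ]
    rw [this]
    ring_nf
  have hinv : Tendsto (fun s : ℝ => s / φ s) (nhdsWithin 0 {(0:ℝ)}ᶜ) (nhds (Real.log 4)⁻¹) := by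
    have := hslope.inv₀ (ne_of_gt hlog)
    refine this.congr ?_
    intro s
    rw [inv_div]
  have hmap : Tendsto (fun z : ℝ => z + 1) (nhdsWithin (-1) (Set.Ioi (-1)))
      (nhdsWithin 0 {(0:ℝ)}ᶜ) := by
    refine tendsto_nhdsWithin_of_tendsto_nhds_of_eventually_within _ ?_ ?_
    · have h := (continuous_add_right (1:ℝ)).tendsto (-1:ℝ)
      norm_num at h
      exact h.mono_left nhdsWithin_le_nhds
    · filter_upwards [self_mem_nhdsWithin] with z hz
      simp only [mem_compl_iff, mem_singleton_iff]
      have : (-1:ℝ) < z := hz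
      intro h
      linarith [h]
  have := hinv.comp hmap
  refine this.congr ?_
  intro z
  simp only [Function.comp_apply]
  rw [div_eq_mul_inv]
  rfl

-- L2 : integral limit
lemma tendsto_I :
    Tendsto (fun z : ℝ => ∫ p in A, f z p) (nhdsWithin (-1) (Set.Ioi (-1)))
      (nhds (∫ p in A, f (-1) p)) := by
  have hA_fin : volume A ≠ ⊤ :=
    ne_top_of_le_ne_top (by simp) (le_trans (measure_mono diff_subset) volume_T_le)
  refine tendsto_integral_filter_of_dominated_convergence (fun _ => (4:ℝ)) ?_ ?_ ?_ ?_
  · exact Eventually.of_forall fun z =>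
      ((measurable_f z).aestronglyMeasurable : AEStronglyMeasurable (f z) (volume.restrict A))
  · filter_upwards [Ioo_mem_nhdsGT_of_mem (by norm_num : (-1:ℝ) ∈ Ico (-1:ℝ) 0)] with z hz
    filter_upwards [ae_restrict_mem measurableSet_A] with p hp
    show ‖(p.1 ^ 2 + p.2 ^ 2) ^ z‖ ≤ (4:ℝ)
    rw [Real.norm_of_nonneg (Real.rpow_nonneg base_nonneg z)]
    exact f_le_four ⟨hz.1.le, hz.2.le⟩ hp
  · exact integrableOn_const hA_fin
  · filter_upwards [ae_restrict_mem measurableSet_A] with p hp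
    have hb : p.1 ^ 2 + p.2 ^ 2 ≠ 0 := by
      have := base_lt_of_mem_A' hp; positivity
    have hcont : ContinuousAt (fun z : ℝ => (p.1 ^ 2 + p.2 ^ 2) ^ z) (-1) :=
      Real.continuousAt_const_rpow hb
    exact (hcont.tendsto).mono_left nhdsWithin_le_nhds

-- L3 : positivity
lemma I_pos : 0 < ∫ p in A, f (-1) p := by
  have hA_fin : volume A ≠ ⊤ :=
    ne_top_of_le_ne_top (by simp) (le_trans (measure_mono diff_subset) volume_T_le)
  have hsub : Icc (3/4 : ℝ) 1 ×ˢ Icc (3/4 : ℝ) 1 ⊆ A := by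
    rintro p ⟨⟨h1, h2⟩, h3, h4⟩
    constructor
    · exact mem_T.2 ⟨⟨by linarith, h2⟩, by linarith, h4⟩
    · intro hmem
      rw [mem_T] at hmem
      have := hmem.1.2
      norm_num at this
      linarith
  have hvol : (0:ENNReal) < volume A := by
    calc (0:ENNReal) < ENNReal.ofReal (1/4) * ENNReal.ofReal (1/4) := by
          rw [← ENNReal.ofReal_mul (by norm_num)]
          norm_num
    _ = volume (Icc (3/4 : ℝ) 1 ×ˢ Icc (3/4 : ℝ) 1) := by
          rw [Measure.volume_eq_prod, Measure.prod_prod, Real.volume_Icc]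
          norm_num
    _ ≤ volume A := measure_mono hsub
  have hvolR : 0 < (volume A).toReal := ENNReal.toReal_pos (ne_of_gt hvol) hA_fin
  have key : 2⁻¹ * (volume A).toReal ≤ ∫ p in A, f (-1) p := by
    refine setIntegral_ge_of_const_le_real measurableSet_A hA_fin ?_
      (integrableOn_A ⟨le_refl _, by norm_num⟩)
    intro p hp
    have hb0 : (0:ℝ) < p.1 ^ 2 + p.2 ^ 2 := lt_trans (by norm_num) (base_lt_of_mem_A' hp)
    have hb2 : p.1 ^ 2 + p.2 ^ 2 ≤ 2 := base_le_of_mem_T1 hp.1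
    show (2:ℝ)⁻¹ ≤ (p.1 ^ 2 + p.2 ^ 2) ^ (-1:ℝ)
    rw [Real.rpow_neg_one]
    gcongr
  linarith [mul_pos (by norm_num : (0:ℝ) < 2⁻¹) hvolR]

end RLCT19

/-- concrete instance of RLCT additivity: the zeta function
`ζ(z) = ∫∫_{[0,1]²} (u² + v²)^z du dv` converges for `z > −1` and has its largest
pole at `z = −1 (= −(1/2 + 1/2))` of order `1 (= 1 + 1 − 1)`: `(z+1)ζ(z)` tends to a
nonzero constant as `z → −1⁺`. -/
theorem rlct_additivity_concrete :
    (∀ z : ℝ, -1 < z →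
      IntegrableOn (fun p : ℝ × ℝ => (p.1 ^ 2 + p.2 ^ 2) ^ z)
        (Set.Icc 0 1 ×ˢ Set.Icc 0 1) volume) ∧
    ∃ C : ℝ, C ≠ 0 ∧
      Tendsto (fun z : ℝ =>
          (z + 1) * ∫ p in Set.Icc (0 : ℝ) 1 ×ˢ Set.Icc (0 : ℝ) 1,
            (p.1 ^ 2 + p.2 ^ 2) ^ z ∂volume)
        (nhdsWithin (-1) (Set.Ioi (-1))) (nhds C) := by
  constructor
  · intro z hz
    exact RLCT19.integrableOn_T1 hz
  · refine ⟨(Real.log 4)⁻¹ * ∫ p in RLCT19.A, RLCT19.f (-1) p, ?_, ?_⟩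
    · exact mul_ne_zero (inv_ne_zero (ne_of_gt (Real.log_pos (by norm_num))))
        (ne_of_gt RLCT19.I_pos)
    · have h := RLCT19.tendsto_factor.mul RLCT19.tendsto_I
      refine Tendsto.congr' ?_ h
      filter_upwards [self_mem_nhdsWithin] with z hz
      have h1 : (-1:ℝ) < z := hz
      rw [show (∫ p in Set.Icc (0:ℝ) 1 ×ˢ Set.Icc (0:ℝ) 1,
            (p.1 ^ 2 + p.2 ^ 2) ^ z ∂volume) = ∫ p in RLCT19.T 1, RLCT19.f z p from rfl,
        RLCT19.zeta_eq h1]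
      ring
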